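/- arXiv:1412.2467 — 2 statements merged into one kernel-verified Lean document; each statement's English description precedes it below -/
import Mathlib

section
/- Let A be a commutative unital ring, let π be an ideal of A, and let n ≥ 3. For all x, y ∈ A, all z ∈ π² (the product ideal), and all indices k ≠ l, the (k,l)-suspension of the symbol S(x,y;z) lies in the commutator subgroup [F_n(π), F_n(π)]. -/
open Matrix

/-- `SL n A` is the special linear group `SL_n(A)`. -/
abbrev SL (n : ℕ) (A : Type) [CommRing A] : Type := Matrix.SpecialLinearGroup (Fin n) A

/-- The elementary matrix `e_{ij}(a) = 1_n + a·e_{ij}` as an element of `SL_n(A)` (for `i ≠ j`). -/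
def elem (A : Type) [CommRing A] {n : ℕ} (i j : Fin n) (hij : i ≠ j) (a : A) : SL n A :=
  ⟨Matrix.transvection i j a, Matrix.det_transvection_of_ne i j hij a⟩

/-- The true elementary subgroup `F_n(π)`: the subgroup of `SL_n(A)` generated by the
elementary matrices with coefficients in the ideal `π`. -/
def Fgrp (A : Type) [CommRing A] (n : ℕ) (π : Ideal A) : Subgroup (SL n A) :=
  Subgroup.closure {x | ∃ (i j : Fin n) (hij : i ≠ j), ∃ a ∈ π, x = elem A i j hij a}

/-- The `(k,l)`-suspension of the symbol `S(x,y;z)`: the matrix obtained from the identity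
matrix `1_n` by grafting `1+xyz` in the `(k,k)`-entry, `-x²z` in the `(k,l)`-entry,
`y²z` in the `(l,k)`-entry and `1-xyz` in the `(l,l)`-entry. -/
def suspMat (A : Type) [CommRing A] {n : ℕ} (k l : Fin n) (x y z : A) :
    Matrix (Fin n) (Fin n) A := fun p q =>
  if p = k ∧ q = k then 1 + x * y * z
  else if p = k ∧ q = l then -(x ^ 2 * z)
  else if p = l ∧ q = k then y ^ 2 * z
  else if p = l ∧ q = l then 1 - x * y * z
  else if p = q then 1 else 0

lemma suspMat_eq (A : Type) [CommRing A] {n : ℕ} (k l : Fin n) (hkl : k ≠ l) (x y z : A) :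
    suspMat A k l x y z =
      1 + Matrix.replicateCol (Fin 1) (fun p => if p = k then x * z else if p = l then y * z else 0) *
        Matrix.replicateRow (Fin 1) (fun q => if q = k then y else if q = l then -x else 0) := by
  ext p q
  simp only [suspMat, Matrix.add_apply, Matrix.mul_apply, Matrix.replicateCol_apply, Matrix.replicateRow_apply,
    Finset.univ_unique, Finset.sum_singleton, Matrix.one_apply]
  split_ifs <;> simp_all <;> ring

lemma suspMat_det (A : Type) [CommRing A] {n : ℕ} (k l : Fin n) (hkl : k ≠ l) (x y z : A) :
    (suspMat A k l x y z).det = 1 := by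
  rw [suspMat_eq A k l hkl]
  erw [Matrix.det_one_add_replicateCol_mul_replicateRow (ι := Fin 1)]
  have : (fun q => if q = k then y else if q = l then -x else 0) ⬝ᵥ
      (fun p => if p = k then x * z else if p = l then y * z else 0) = 0 := by
    unfold dotProduct
    have h : ∀ q : Fin n, (if q = k then y else if q = l then -x else 0) *
        (if q = k then x * z else if q = l then y * z else 0)
        = (if q = k then y * (x * z) else 0) + (if q = l then -x * (y * z) else 0) := by
      intro q
      split_ifs with h1 h2 <;> simp_all
    simp only [h, Finset.sum_add_distrib, Finset.sum_ite_eq', Finset.mem_univ, if_true]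
    ring
  rw [this, add_zero]

/-- The `(k,l)`-suspension of the symbol `S(x,y;z)` as an element of `SL_n(A)` (for `k ≠ l`). -/
def suspS (A : Type) [CommRing A] {n : ℕ} (k l : Fin n) (hkl : k ≠ l) (x y z : A) : SL n A :=
  ⟨suspMat A k l x y z, suspMat_det A k l hkl x y z⟩


section Aux

variable {A : Type} [CommRing A] {n : ℕ}

lemma std_mul_ne {i j p q : Fin n} (h : j ≠ p) (c d : A) :
    single i j c * single p q d = (0 : Matrix (Fin n) (Fin n) A) :=
  Matrix.single_mul_single_of_ne c i j p h d

lemma suspMat_decomp (k l : Fin n) (hkl : k ≠ l) (x y z c1 c2 c3 c4 : A)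
    (h1 : c1 = x * y * z) (h2 : c2 = -(x ^ 2 * z)) (h3 : c3 = y ^ 2 * z)
    (h4 : c4 = -(x * y * z)) :
    suspMat A k l x y z = 1 + ((single k k c1 + single k l c2) +
      (single l k c3 + single l l c4)) := by
  subst h1 h2 h3 h4
  ext p q
  by_cases hpk : p = k <;> by_cases hpl : p = l <;> by_cases hqk : q = k <;>
      by_cases hql : q = l <;>
    simp_all [suspMat, Matrix.one_apply, Matrix.single, Matrix.of_apply, Matrix.add_apply, eq_comm] <;>
    ring

lemma elem_pair_col (k l m : Fin n) (hkm : k ≠ m) (hlm : l ≠ m) (c d : A) :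
    (elem A k m hkm c).val * (elem A l m hlm d).val =
      1 + (single k m c + single l m d) := by
  show Matrix.transvection k m c * Matrix.transvection l m d = _
  simp only [Matrix.transvection, add_mul, mul_add, one_mul, mul_one,
    std_mul_ne (Ne.symm hlm), add_zero]
  abel

lemma elem_pair_row (k l m : Fin n) (hmk : m ≠ k) (hml : m ≠ l) (c d : A) :
    (elem A m k hmk c).val * (elem A m l hml d).val =
      1 + (single m k c + single m l d) := by
  show Matrix.transvection m k c * Matrix.transvection m l d = _
  simp only [Matrix.transvection, add_mul, mul_add, one_mul, mul_one,
    std_mul_ne (Ne.symm hmk), add_zero]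
  abel

lemma XY_eq (k l m : Fin n) (c1 c2 d1 d2 : A) :
    ((single k m c1 + single l m c2) :
        Matrix (Fin n) (Fin n) A) * (single m k d1 + single m l d2) =
      ((single k k (c1 * d1) + single k l (c1 * d2)) +
        (single l k (c2 * d1) + single l l (c2 * d2))) := by
  simp only [add_mul, mul_add, Matrix.single_mul_single_same]
  abel

lemma YX_zero (k l m : Fin n) (hkl : k ≠ l) (c1 c2 d1 d2 : A)
    (h : c1 * d1 + c2 * d2 = 0) :
    ((single m k c1 + single m l c2) :
        Matrix (Fin n) (Fin n) A) * (single k m d1 + single l m d2) = 0 := by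
  simp only [add_mul, mul_add, Matrix.single_mul_single_same, std_mul_ne hkl,
    std_mul_ne (Ne.symm hkl), add_zero, zero_add]
  rw [← Matrix.single_add, h, Matrix.single_zero]

lemma NX_zero (k l m : Fin n) (hkl : k ≠ l) (c1 c2 c3 c4 d1 d2 : A)
    (h1 : c1 * d1 + c2 * d2 = 0) (h2 : c3 * d1 + c4 * d2 = 0) :
    (((single k k c1 + single k l c2) +
        (single l k c3 + single l l c4)) :
        Matrix (Fin n) (Fin n) A) * (single k m d1 + single l m d2) = 0 := by
  simp only [add_mul, mul_add, Matrix.single_mul_single_same, std_mul_ne hkl,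
    std_mul_ne (Ne.symm hkl), add_zero, zero_add]
  have hmerge : (single k m (c1 * d1) + single l m (c3 * d1) +
      (single k m (c2 * d2) + single l m (c4 * d2)) :
      Matrix (Fin n) (Fin n) A) =
      single k m (c1 * d1 + c2 * d2) + single l m (c3 * d1 + c4 * d2) := by
    simp only [Matrix.single_add]
    abel
  rw [hmerge, h1, h2]
  simp

lemma NY_zero (k l m : Fin n) (hkm : k ≠ m) (hlm : l ≠ m) (c1 c2 c3 c4 d1 d2 : A) :
    (((single k k c1 + single k l c2) +
        (single l k c3 + single l l c4)) :
        Matrix (Fin n) (Fin n) A) * (single m k d1 + single m l d2) = 0 := by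
  simp only [add_mul, mul_add, std_mul_ne hkm, std_mul_ne hlm, add_zero, zero_add]

lemma NN_zero (k l : Fin n) (hkl : k ≠ l) (c1 c2 c3 c4 d1 d2 d3 d4 : A)
    (h1 : c1 * d1 + c2 * d3 = 0) (h2 : c1 * d2 + c2 * d4 = 0)
    (h3 : c3 * d1 + c4 * d3 = 0) (h4 : c3 * d2 + c4 * d4 = 0) :
    (((single k k c1 + single k l c2) +
        (single l k c3 + single l l c4)) :
        Matrix (Fin n) (Fin n) A) *
      ((single k k d1 + single k l d2) +
        (single l k d3 + single l l d4)) = 0 := by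
  have key : (((single k k c1 + single k l c2) +
        (single l k c3 + single l l c4)) :
        Matrix (Fin n) (Fin n) A) *
      ((single k k d1 + single k l d2) +
        (single l k d3 + single l l d4)) =
      ((single k k (c1 * d1 + c2 * d3) + single k l (c1 * d2 + c2 * d4)) +
        (single l k (c3 * d1 + c4 * d3) + single l l (c3 * d2 + c4 * d4))) := by
    simp only [add_mul, mul_add, Matrix.single_mul_single_same, std_mul_ne hkl,
      std_mul_ne (Ne.symm hkl), add_zero, zero_add, Matrix.single_add]
    abel
  rw [key, h1, h2, h3, h4]
  simp

lemma key_mat (k l m : Fin n) (hkl : k ≠ l) (hkm : k ≠ m) (hlm : l ≠ m) (x y a b : A) :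
    (1 + (single k m (a * x) + single l m (a * y)) :
        Matrix (Fin n) (Fin n) A) *
      (1 + (single m k (b * y) + single m l (-(b * x)))) =
    suspMat A k l x y (a * b) *
      ((1 + (single m k (b * y) + single m l (-(b * x)))) *
        (1 + (single k m (a * x) + single l m (a * y)))) := by
  have hS : suspMat A k l x y (a * b) =
      1 + ((single k k ((a * x) * (b * y)) + single k l ((a * x) * (-(b * x)))) +
        (single l k ((a * y) * (b * y)) + single l l ((a * y) * (-(b * x))))) :=
    suspMat_decomp k l hkl x y (a * b) _ _ _ _ (by ring) (by ring) (by ring) (by ring)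
  rw [hS]
  generalize hXdef : (single k m (a * x) + single l m (a * y) :
    Matrix (Fin n) (Fin n) A) = X
  generalize hYdef : (single m k (b * y) + single m l (-(b * x)) :
    Matrix (Fin n) (Fin n) A) = Y
  generalize hNdef : ((single k k ((a * x) * (b * y)) +
      single k l ((a * x) * (-(b * x)))) +
      (single l k ((a * y) * (b * y)) + single l l ((a * y) * (-(b * x)))) :
    Matrix (Fin n) (Fin n) A) = N
  have hXY : X * Y = N := by rw [← hXdef, ← hYdef, ← hNdef]; exact XY_eq k l m _ _ _ _
  have hYX : Y * X = 0 := by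
    rw [← hXdef, ← hYdef]; exact YX_zero k l m hkl _ _ _ _ (by ring)
  have hNY : N * Y = 0 := by
    rw [← hYdef, ← hNdef]; exact NY_zero k l m hkm hlm _ _ _ _ _ _
  have hNX : N * X = 0 := by
    rw [← hXdef, ← hNdef]; exact NX_zero k l m hkl _ _ _ _ _ _ (by ring) (by ring)
  calc (1 + X) * (1 + Y) = 1 + X + Y + X * Y := by noncomm_ring
    _ = 1 + N + Y + X + N * Y + N * X + Y * X + N * (Y * X) := by
        rw [hXY, hNY, hNX, hYX, mul_zero]; abel
    _ = (1 + N) * ((1 + Y) * (1 + X)) := by noncomm_ring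

lemma suspS_add (k l : Fin n) (hkl : k ≠ l) (x y z w : A) :
    suspS A k l hkl x y (z + w) = suspS A k l hkl x y z * suspS A k l hkl x y w := by
  apply Subtype.ext
  show suspMat A k l x y (z + w) = suspMat A k l x y z * suspMat A k l x y w
  rw [suspMat_decomp k l hkl x y z (x * y * z) (-(x ^ 2 * z)) (y ^ 2 * z) (-(x * y * z))
      rfl rfl rfl rfl,
    suspMat_decomp k l hkl x y w (x * y * w) (-(x ^ 2 * w)) (y ^ 2 * w) (-(x * y * w))
      rfl rfl rfl rfl,
    suspMat_decomp k l hkl x y (z + w) (x * y * z + x * y * w)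
      (-(x ^ 2 * z) + -(x ^ 2 * w)) (y ^ 2 * z + y ^ 2 * w)
      (-(x * y * z) + -(x * y * w)) (by ring) (by ring) (by ring) (by ring)]
  have hNN := NN_zero k l hkl (x * y * z) (-(x ^ 2 * z)) (y ^ 2 * z) (-(x * y * z))
    (x * y * w) (-(x ^ 2 * w)) (y ^ 2 * w) (-(x * y * w))
    (by ring) (by ring) (by ring) (by ring)
  generalize hNzdef : ((single k k (x * y * z) + single k l (-(x ^ 2 * z))) +
      (single l k (y ^ 2 * z) + single l l (-(x * y * z))) :
    Matrix (Fin n) (Fin n) A) = Nz at *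
  generalize hNwdef : ((single k k (x * y * w) + single k l (-(x ^ 2 * w))) +
      (single l k (y ^ 2 * w) + single l l (-(x * y * w))) :
    Matrix (Fin n) (Fin n) A) = Nw at *
  have hsum : ((single k k (x * y * z + x * y * w) +
      single k l (-(x ^ 2 * z) + -(x ^ 2 * w))) +
      (single l k (y ^ 2 * z + y ^ 2 * w) +
        single l l (-(x * y * z) + -(x * y * w))) :
    Matrix (Fin n) (Fin n) A) = Nz + Nw := by
    rw [← hNzdef, ← hNwdef]
    simp only [Matrix.single_add]
    abel
  rw [hsum]
  calc (1 : Matrix (Fin n) (Fin n) A) + (Nz + Nw)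
      = 1 + Nz + Nw + Nz * Nw := by rw [hNN]; abel
    _ = (1 + Nz) * (1 + Nw) := by noncomm_ring

lemma elem_mem_Fgrp (π : Ideal A) (i j : Fin n) (hij : i ≠ j) (a : A) (ha : a ∈ π) :
    elem A i j hij a ∈ Fgrp A n π :=
  Subgroup.subset_closure ⟨i, j, hij, a, ha, rfl⟩

lemma suspS_zero (k l : Fin n) (hkl : k ≠ l) (x y : A) :
    suspS A k l hkl x y 0 = 1 := by
  apply Subtype.ext
  show suspMat A k l x y 0 = (1 : Matrix (Fin n) (Fin n) A)
  ext p q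
  by_cases hpk : p = k <;> by_cases hpl : p = l <;> by_cases hqk : q = k <;>
      by_cases hql : q = l <;>
    simp_all [suspMat, Matrix.one_apply, eq_comm]

open scoped commutatorElement in
lemma key_SL (k l m : Fin n) (hkl : k ≠ l) (hkm : k ≠ m) (hlm : l ≠ m) (x y a b : A) :
    suspS A k l hkl x y (a * b) =
      ⁅elem A k m hkm (a * x) * elem A l m hlm (a * y),
        elem A m k (Ne.symm hkm) (b * y) * elem A m l (Ne.symm hlm) (-(b * x))⁆ := by
  set E := elem A k m hkm (a * x) * elem A l m hlm (a * y) with hE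
  set F := elem A m k (Ne.symm hkm) (b * y) * elem A m l (Ne.symm hlm) (-(b * x)) with hF
  have hEq : E * F = suspS A k l hkl x y (a * b) * (F * E) := by
    apply Subtype.ext
    show E.val * F.val = (suspMat A k l x y (a * b)) * (F.val * E.val)
    have hEv : E.val = 1 + (single k m (a * x) + single l m (a * y)) := by
      rw [hE]
      show (elem A k m hkm (a * x)).val * (elem A l m hlm (a * y)).val = _
      exact elem_pair_col k l m hkm hlm _ _
    have hFv : F.val = 1 + (single m k (b * y) + single m l (-(b * x))) := by
      rw [hF]
      show (elem A m k (Ne.symm hkm) (b * y)).val * (elem A m l (Ne.symm hlm) (-(b * x))).val = _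
      exact elem_pair_row k l m (Ne.symm hkm) (Ne.symm hlm) _ _
    rw [hEv, hFv]
    exact key_mat k l m hkl hkm hlm x y a b
  rw [commutatorElement_def, show E * F * E⁻¹ * F⁻¹ = E * F * (F * E)⁻¹ from by group, hEq]
  group

end Aux

/-- For `n ≥ 3`, `x, y ∈ A`, `z ∈ π²` and `k ≠ l`, the `(k,l)`-suspension of the symbol
`S(x,y;z)` lies in the commutator subgroup `[F_n(π), F_n(π)]`. -/
theorem suspension_mem_commutator (A : Type) [CommRing A] (π : Ideal A) (n : ℕ)
    (hn : 3 ≤ n) (x y z : A) (hz : z ∈ π ^ 2) (k l : Fin n) (hkl : k ≠ l) :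
    suspS A k l hkl x y z ∈ ⁅Fgrp A n π, Fgrp A n π⁆ := by
  have hex : ∃ m : Fin n, k ≠ m ∧ l ≠ m := by
    by_contra h
    push_neg at h
    have hsub : (Finset.univ : Finset (Fin n)) ⊆ {k, l} := by
      intro m _
      by_cases hk : m = k
      · simp [hk]
      · have hlm := h m (fun hkm' => hk hkm'.symm)
        simp [Finset.mem_insert, hlm.symm]
    have hc := Finset.card_le_card hsub
    have h2 : ({k, l} : Finset (Fin n)).card ≤ 2 :=
      (Finset.card_insert_le _ _).trans (by simp)
    simp only [Finset.card_univ, Fintype.card_fin] at hc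
    omega
  obtain ⟨m, hkm, hlm⟩ := hex
  rw [sq] at hz
  refine Submodule.mul_induction_on hz ?_ ?_
  · intro a ha b hb
    rw [key_SL k l m hkl hkm hlm x y a b]
    exact Subgroup.commutator_mem_commutator
      (mul_mem (elem_mem_Fgrp π k m hkm (a * x) (Ideal.mul_mem_right x π ha))
        (elem_mem_Fgrp π l m hlm (a * y) (Ideal.mul_mem_right y π ha)))
      (mul_mem (elem_mem_Fgrp π m k (Ne.symm hkm) (b * y) (Ideal.mul_mem_right y π hb))
        (elem_mem_Fgrp π m l (Ne.symm hlm) (-(b * x))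
          (neg_mem (Ideal.mul_mem_right x π hb))))
  · intro u v hu hv
    rw [suspS_add]
    exact mul_mem hu hv
end

section
/- Let A be a commutative unital ring, let π be an ideal of A, and let n ≥ 3. For all x ∈ A, all y, z ∈ π, and all indices k ≠ l, the (k,l)-suspension of the symbol S(x,y;z) lies in the true elementary subgroup F_n(π). -/
open Matrix

set_option linter.unreachableTactic false
set_option linter.unusedTactic false
set_option maxHeartbeats 2000000

/-- Auxiliary block matrix: identity outside the `{k,l,m}` block, with prescribed entries
inside. -/
def blkS (A : Type) [CommRing A] {n : ℕ} (k l m : Fin n) (a b c d e f g h i : A) :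
    Matrix (Fin n) (Fin n) A := fun p q =>
  if p = k then (if q = k then a else if q = l then b else if q = m then c else 0)
  else if p = l then (if q = k then d else if q = l then e else if q = m then f else 0)
  else if p = m then (if q = k then g else if q = l then h else if q = m then i else 0)
  else if p = q then 1 else 0

lemma blkS_mul_km (A : Type) [CommRing A] {n : ℕ} (k l m : Fin n)
    (hkl : k ≠ l) (hkm : k ≠ m) (hlm : l ≠ m) (a b c d e f g h i t : A) :
    blkS A k l m a b c d e f g h i * transvection k m t
      = blkS A k l m a b (c + t*a) d e (f + t*d) g h (i + t*g) := by
  ext p q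
  rcases eq_or_ne q m with rfl | hq
  · rw [Matrix.mul_transvection_apply_same]
    simp only [blkS]
    split_ifs <;> simp_all <;> try ring
  · rw [Matrix.mul_transvection_apply_of_ne k m p q hq]
    simp only [blkS]
    split_ifs <;> simp_all

lemma blkS_mul_lm (A : Type) [CommRing A] {n : ℕ} (k l m : Fin n)
    (hkl : k ≠ l) (hkm : k ≠ m) (hlm : l ≠ m) (a b c d e f g h i t : A) :
    blkS A k l m a b c d e f g h i * transvection l m t
      = blkS A k l m a b (c + t*b) d e (f + t*e) g h (i + t*h) := by
  ext p q
  rcases eq_or_ne q m with rfl | hq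
  · rw [Matrix.mul_transvection_apply_same]
    simp only [blkS]
    split_ifs <;> simp_all <;> try ring
  · rw [Matrix.mul_transvection_apply_of_ne l m p q hq]
    simp only [blkS]
    split_ifs <;> simp_all

lemma blkS_mul_mk (A : Type) [CommRing A] {n : ℕ} (k l m : Fin n)
    (hkl : k ≠ l) (hkm : k ≠ m) (hlm : l ≠ m) (a b c d e f g h i t : A) :
    blkS A k l m a b c d e f g h i * transvection m k t
      = blkS A k l m (a + t*c) b c (d + t*f) e f (g + t*i) h i := by
  ext p q
  rcases eq_or_ne q k with rfl | hq
  · rw [Matrix.mul_transvection_apply_same]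
    simp only [blkS]
    split_ifs <;> simp_all <;> try ring
  · rw [Matrix.mul_transvection_apply_of_ne m k p q hq]
    simp only [blkS]
    split_ifs <;> simp_all

lemma blkS_mul_kl (A : Type) [CommRing A] {n : ℕ} (k l m : Fin n)
    (hkl : k ≠ l) (hkm : k ≠ m) (hlm : l ≠ m) (a b c d e f g h i t : A) :
    blkS A k l m a b c d e f g h i * transvection k l t
      = blkS A k l m a (b + t*a) c d (e + t*d) f g (h + t*g) i := by
  ext p q
  rcases eq_or_ne q l with rfl | hq
  · rw [Matrix.mul_transvection_apply_same]
    simp only [blkS]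
    split_ifs <;> simp_all <;> try ring
  · rw [Matrix.mul_transvection_apply_of_ne k l p q hq]
    simp only [blkS]
    split_ifs <;> simp_all

lemma blkS_mul_lk (A : Type) [CommRing A] {n : ℕ} (k l m : Fin n)
    (hkl : k ≠ l) (hkm : k ≠ m) (hlm : l ≠ m) (a b c d e f g h i t : A) :
    blkS A k l m a b c d e f g h i * transvection l k t
      = blkS A k l m (a + t*b) b c (d + t*e) e f (g + t*h) h i := by
  ext p q
  rcases eq_or_ne q k with rfl | hq
  · rw [Matrix.mul_transvection_apply_same]
    simp only [blkS]
    split_ifs <;> simp_all <;> try ring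
  · rw [Matrix.mul_transvection_apply_of_ne l k p q hq]
    simp only [blkS]
    split_ifs <;> simp_all

lemma blkS_one (A : Type) [CommRing A] {n : ℕ} (k l m : Fin n)
    (hkl : k ≠ l) (hkm : k ≠ m) (hlm : l ≠ m) :
    (1 : Matrix (Fin n) (Fin n) A) = blkS A k l m 1 0 0 0 1 0 0 0 1 := by
  ext p q
  simp only [blkS, Matrix.one_apply]
  split_ifs <;> simp_all

lemma key_matrix_identity (A : Type) [CommRing A] {n : ℕ} (k l m : Fin n)
    (hkl : k ≠ l) (hkm : k ≠ m) (hlm : l ≠ m) (x y z : A) :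
    suspMat A k l x y z =
      1 * transvection k m (x*z) * transvection l m (y*z) * transvection m k y *
      transvection k l (-(x^2*z)) * transvection k m (-(x*z)) *
      transvection l k y * transvection m k (-(x*y)) *
      transvection k l (-(x*z)) * transvection k m (-z) *
      transvection l k (-y) * transvection m k (x*y) *
      transvection k l (x*z) * transvection k m z * transvection m k (-y) := by
  rw [blkS_one A k l m hkl hkm hlm]
  simp only [blkS_mul_km A k l m hkl hkm hlm, blkS_mul_lm A k l m hkl hkm hlm,
    blkS_mul_mk A k l m hkl hkm hlm, blkS_mul_kl A k l m hkl hkm hlm,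
    blkS_mul_lk A k l m hkl hkm hlm]
  ext p q
  simp only [blkS, suspMat]
  by_cases hpk : p = k <;> by_cases hpl : p = l <;> by_cases hpm : p = m <;>
    by_cases hqk : q = k <;> by_cases hql : q = l <;> by_cases hqm : q = m <;>
      simp_all <;> try ring
  all_goals exact fun hh => absurd hh.symm (by assumption)

lemma elem_mem (A : Type) [CommRing A] (π : Ideal A) {n : ℕ} (i j : Fin n) (hij : i ≠ j)
    (a : A) (ha : a ∈ π) : elem A i j hij a ∈ Fgrp A n π :=
  Subgroup.subset_closure ⟨i, j, hij, a, ha, rfl⟩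

/-- For `n ≥ 3`, `x ∈ A`, `y, z ∈ π` and `k ≠ l`, the `(k,l)`-suspension of the symbol
`S(x,y;z)` lies in the true elementary subgroup `F_n(π)`. -/
theorem suspension_mem_trueElementary (A : Type) [CommRing A] (π : Ideal A) (n : ℕ)
    (hn : 3 ≤ n) (x y z : A) (hy : y ∈ π) (hz : z ∈ π) (k l : Fin n) (hkl : k ≠ l) :
    suspS A k l hkl x y z ∈ Fgrp A n π := by
  obtain ⟨m, hmk, hml⟩ : ∃ m : Fin n, m ≠ k ∧ m ≠ l := by
    by_contra hcon
    push_neg at hcon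
    have hsub : (Finset.univ : Finset (Fin n)) ⊆ {k, l} := by
      intro a _
      rcases eq_or_ne a k with rfl | h
      · simp
      · simp [hcon a h]
    have h1 := Finset.card_le_card hsub
    have h2 : ({k, l} : Finset (Fin n)).card ≤ 2 :=
      le_trans (Finset.card_insert_le _ _) (by simp)
    rw [Finset.card_univ, Fintype.card_fin] at h1
    omega
  have hkm : k ≠ m := hmk.symm
  have hlm : l ≠ m := hml.symm
  have hprod : suspS A k l hkl x y z =
      elem A k m hkm (x*z) * elem A l m hlm (y*z) * elem A m k hmk y *
      elem A k l hkl (-(x^2*z)) * elem A k m hkm (-(x*z)) *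
      elem A l k hkl.symm y * elem A m k hmk (-(x*y)) *
      elem A k l hkl (-(x*z)) * elem A k m hkm (-z) *
      elem A l k hkl.symm (-y) * elem A m k hmk (x*y) *
      elem A k l hkl (x*z) * elem A k m hkm z * elem A m k hmk (-y) := by
    apply Subtype.ext
    simp only [Matrix.SpecialLinearGroup.coe_mul]
    have := key_matrix_identity A k l m hkl hkm hlm x y z
    rw [one_mul] at this
    exact this
  rw [hprod]
  refine Subgroup.mul_mem _ (Subgroup.mul_mem _ (Subgroup.mul_mem _ (Subgroup.mul_mem _
    (Subgroup.mul_mem _ (Subgroup.mul_mem _ (Subgroup.mul_mem _ (Subgroup.mul_mem _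
    (Subgroup.mul_mem _ (Subgroup.mul_mem _ (Subgroup.mul_mem _ (Subgroup.mul_mem _
    (Subgroup.mul_mem _ ?_ ?_) ?_) ?_) ?_) ?_) ?_) ?_) ?_) ?_) ?_) ?_) ?_) ?_ <;>
    apply elem_mem
  · exact Ideal.mul_mem_left π _ hz
  · exact Ideal.mul_mem_left π _ hz
  · exact hy
  · exact π.neg_mem (Ideal.mul_mem_left π _ hz)
  · exact π.neg_mem (Ideal.mul_mem_left π _ hz)
  · exact hy
  · exact π.neg_mem (Ideal.mul_mem_left π _ hy)
  · exact π.neg_mem (Ideal.mul_mem_left π _ hz)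
  · exact π.neg_mem hz
  · exact π.neg_mem hy
  · exact Ideal.mul_mem_left π _ hy
  · exact Ideal.mul_mem_left π _ hz
  · exact hz
  · exact π.neg_mem hy
end
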